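/- For all real numbers L ≥ 0 and u with 10^{-5} ≤ u ≤ 1, the tail R_L(u) = Σ_{ℓ ≥ L+1} ∫₀^{1/2} ψ(v) sin(2^{ℓ+1}πuv)/2^ℓ dv, with ψ(v) = cot(πv) − πv/sin²(πv), satisfies |R_L(u)| ≤ π⁴u/(504·8^L) + (π³/48)(1/2^L − 1/(7·8^L)). -/

import Mathlib

open Real MeasureTheory intervalIntegral Set

lemma sin_ge_sub_cube {x : ℝ} (hx : 0 ≤ x) : x - x ^ 3 / 6 ≤ Real.sin x := by
  set g : ℝ → ℝ := fun y => Real.sin y - y + y ^ 3 / 6 with hg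
  have hderiv : ∀ y : ℝ, HasDerivAt g (Real.cos y - 1 + y ^ 2 / 2) y := by
    intro y
    have h1 := (Real.hasDerivAt_sin y).sub (hasDerivAt_id y)
    have h2 := (hasDerivAt_pow 3 y).div_const 6
    have := h1.add h2
    refine this.congr_deriv ?_
    push_cast
    ring
  have hmono : Monotone g := by
    apply monotone_of_deriv_nonneg
    · exact fun y => (hderiv y).differentiableAt
    · intro y
      rw [(hderiv y).deriv]
      nlinarith [Real.one_sub_sq_div_two_le_cos (x := y)]
  have := hmono hx
  simp only [hg, Real.sin_zero] at this
  nlinarith [this]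

lemma psi_bound {v : ℝ} (hv : 0 < v) (hv2 : v ≤ 1 / 2) :
    |Real.cos (π * v) / Real.sin (π * v) - (π * v) / (Real.sin (π * v)) ^ 2| ≤ π ^ 3 * v / 6 := by
  have hπ := Real.pi_pos
  have hs : 2 * v ≤ Real.sin (π * v) := by
    have := Real.mul_le_sin (x := π * v) (by positivity) (by nlinarith)
    calc 2 * v = 2 / π * (π * v) := by field_simp
    _ ≤ _ := this
  have hspos : 0 < Real.sin (π * v) := by nlinarith
  have key : Real.cos (π * v) / Real.sin (π * v) - (π * v) / (Real.sin (π * v)) ^ 2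
      = (Real.sin (2 * (π * v)) / 2 - π * v) / (Real.sin (π * v)) ^ 2 := by
    rw [Real.sin_two_mul]
    field_simp
  rw [key]
  have hnum : |Real.sin (2 * (π * v)) / 2 - π * v| ≤ 2 * π ^ 3 * v ^ 3 / 3 := by
    have h1 : Real.sin (2 * (π * v)) ≤ 2 * (π * v) := Real.sin_le (by positivity)
    have h2 : 2 * (π * v) - (2 * (π * v)) ^ 3 / 6 ≤ Real.sin (2 * (π * v)) :=
      _root_.sin_ge_sub_cube (by positivity)
    rw [abs_le]
    constructor <;> nlinarith
  rw [abs_div, abs_of_nonneg (by positivity : (0:ℝ) ≤ (Real.sin (π * v)) ^ 2)]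
  have hden : 4 * v ^ 2 ≤ (Real.sin (π * v)) ^ 2 := by nlinarith
  calc |Real.sin (2 * (π * v)) / 2 - π * v| / (Real.sin (π * v)) ^ 2
      ≤ (2 * π ^ 3 * v ^ 3 / 3) / (4 * v ^ 2) :=
        div_le_div₀ (by positivity) hnum (by positivity) hden
    _ = π ^ 3 * v / 6 := by field_simp; ring

noncomputable def Fc (c : ℝ) (v : ℝ) : ℝ :=
  (Real.cos (π * v) / Real.sin (π * v) - (π * v) / (Real.sin (π * v)) ^ 2) * Real.sin (c * v)

lemma Fc_measurable (c : ℝ) : Measurable (Fc c) := by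
  unfold Fc; fun_prop

lemma Fc_abs_le {c v : ℝ} (hv : 0 < v) (hv2 : v ≤ 1 / 2) : |Fc c v| ≤ π ^ 3 * v / 6 := by
  rw [Fc, abs_mul]
  calc |Real.cos (π * v) / Real.sin (π * v) - π * v / Real.sin (π * v) ^ 2| * |Real.sin (c * v)|
      ≤ (π ^ 3 * v / 6) * 1 := by
        apply mul_le_mul (psi_bound hv hv2) (Real.abs_sin_le_one _) (abs_nonneg _) (by positivity)
    _ = π ^ 3 * v / 6 := mul_one _

lemma Fc_abs_le' {c v : ℝ} (hc : 0 ≤ c) (hv : 0 ≤ v) (hv2 : v ≤ 1 / 2) :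
    |Fc c v| ≤ π ^ 3 * c * v ^ 2 / 6 := by
  rcases eq_or_lt_of_le hv with h | h
  · simp [Fc, ← h]
  · rw [Fc, abs_mul]
    calc |Real.cos (π * v) / Real.sin (π * v) - π * v / Real.sin (π * v) ^ 2| * |Real.sin (c * v)|
        ≤ (π ^ 3 * v / 6) * (c * v) := by
          apply mul_le_mul (psi_bound h hv2) _ (abs_nonneg _) (by positivity)
          calc |Real.sin (c * v)| ≤ |c * v| := Real.abs_sin_le_abs
          _ = c * v := abs_of_nonneg (by positivity)
      _ = π ^ 3 * c * v ^ 2 / 6 := by ring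

lemma Fc_intervalIntegrable (c : ℝ) {a b : ℝ} (ha : 0 ≤ a) (hb : b ≤ 1/2) (hab : a ≤ b) :
    IntervalIntegrable (Fc c) volume a b := by
  have h0 : IntervalIntegrable (Fc c) volume 0 (1/2) := by
    rw [intervalIntegrable_iff, uIoc_of_le (by norm_num)]
    apply Integrable.mono' (g := fun _ => π ^ 3 / 12)
        (integrableOn_const (by simp) (by simp))
        (Fc_measurable c).aestronglyMeasurable
    rw [ae_restrict_iff' measurableSet_Ioc]
    filter_upwards with v hv
    rw [Real.norm_eq_abs]
    calc |Fc c v| ≤ π ^ 3 * v / 6 := Fc_abs_le hv.1 hv.2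
      _ ≤ π ^ 3 / 12 := by
          have := mul_le_mul_of_nonneg_left hv.2 (by positivity : (0:ℝ) ≤ π ^ 3)
          linarith
  apply h0.mono_set
  rw [uIcc_of_le hab, uIcc_of_le (by norm_num : (0:ℝ) ≤ 1/2)]
  exact Icc_subset_Icc ha hb

lemma integral_Fc_bound (c : ℝ) (hc : 0 ≤ c) (a : ℝ) (ha : 0 < a) (ha2 : a ≤ 1/2) :
    |∫ v in (0:ℝ)..(1/2), Fc c v| ≤ π ^ 3 * c * a ^ 3 / 18 + π ^ 3 / 6 * (1/8 - a ^ 2 / 2) := by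
  have hIa : IntervalIntegrable (Fc c) volume 0 a := Fc_intervalIntegrable c le_rfl ha2 ha.le
  have hIb : IntervalIntegrable (Fc c) volume a (1/2) := Fc_intervalIntegrable c ha.le le_rfl ha2
  have hsplit : (∫ v in (0:ℝ)..(1/2), Fc c v)
      = (∫ v in (0:ℝ)..a, Fc c v) + ∫ v in a..(1/2), Fc c v :=
    (integral_add_adjacent_intervals hIa hIb).symm
  have h1 : |∫ v in (0:ℝ)..a, Fc c v| ≤ π ^ 3 * c * a ^ 3 / 18 := by
    calc |∫ v in (0:ℝ)..a, Fc c v| ≤ ∫ v in (0:ℝ)..a, |Fc c v| :=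
          abs_integral_le_integral_abs ha.le
      _ ≤ ∫ v in (0:ℝ)..a, π ^ 3 * c / 6 * v ^ 2 := by
          apply integral_mono_on ha.le hIa.abs (by apply Continuous.intervalIntegrable; fun_prop)
          intro x hx
          have := Fc_abs_le' (c := c) hc hx.1 (le_trans hx.2 ha2)
          linarith [this]
      _ = π ^ 3 * c * a ^ 3 / 18 := by
          rw [intervalIntegral.integral_const_mul, integral_pow]
          norm_num; ring
  have h2 : |∫ v in a..(1/2), Fc c v| ≤ π ^ 3 / 6 * (1/8 - a ^ 2 / 2) := by
    calc |∫ v in a..(1/2), Fc c v| ≤ ∫ v in a..(1/2), |Fc c v| :=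
          abs_integral_le_integral_abs ha2
      _ ≤ ∫ v in a..(1/2), π ^ 3 / 6 * v := by
          apply integral_mono_on ha2 hIb.abs (by apply Continuous.intervalIntegrable; fun_prop)
          intro x hx
          have := Fc_abs_le (c := c) (lt_of_lt_of_le ha hx.1) hx.2
          linarith [this]
      _ = π ^ 3 / 6 * (1/8 - a ^ 2 / 2) := by
          rw [intervalIntegral.integral_const_mul, integral_id]
          ring
  calc |∫ v in (0:ℝ)..(1/2), Fc c v| ≤ |∫ v in (0:ℝ)..a, Fc c v| + |∫ v in a..(1/2), Fc c v| := by
        rw [hsplit]; exact abs_add_le _ _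
    _ ≤ _ := add_le_add h1 h2

set_option maxHeartbeats 1000000 in
theorem RL_tail_bound (L : ℕ) (u : ℝ) (hu : 10 ^ (-5 : ℤ) ≤ u) (hu1 : u ≤ 1) :
    |∑' ℓ : ℕ, if L + 1 ≤ ℓ then
        (∫ v in (0:ℝ)..(1/2),
          (Real.cos (Real.pi * v) / Real.sin (Real.pi * v)
            - (Real.pi * v) / (Real.sin (Real.pi * v)) ^ 2)
            * Real.sin (2 ^ (ℓ + 1) * Real.pi * u * v)) / 2 ^ ℓ
      else 0|
    ≤ Real.pi ^ 4 * u / (504 * 8 ^ L)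
      + Real.pi ^ 3 / 48 * (1 / 2 ^ L - 1 / (7 * 8 ^ L)) := by
  have hu0 : (0:ℝ) < u := lt_of_lt_of_le (by positivity) hu
  have hπ := Real.pi_pos
  set term : ℕ → ℝ := fun ℓ => if L + 1 ≤ ℓ then
      (∫ v in (0:ℝ)..(1/2),
        (Real.cos (Real.pi * v) / Real.sin (Real.pi * v)
          - (Real.pi * v) / (Real.sin (Real.pi * v)) ^ 2)
          * Real.sin (2 ^ (ℓ + 1) * Real.pi * u * v)) / 2 ^ ℓ
    else 0 with hterm_def
  set b : ℕ → ℝ := fun ℓ => if L + 1 ≤ ℓ then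
      π ^ 4 * u / (72 * 8 ^ ℓ) + π ^ 3 / (48 * 2 ^ ℓ) - π ^ 3 / (48 * 8 ^ ℓ) else 0 with hb_def
  -- pointwise bound
  have hterm : ∀ ℓ, |term ℓ| ≤ b ℓ := by
    intro ℓ
    simp only [hterm_def, hb_def]
    by_cases h : L + 1 ≤ ℓ
    · rw [if_pos h, if_pos h]
      have hInt : (∫ v in (0:ℝ)..(1/2),
          (Real.cos (Real.pi * v) / Real.sin (Real.pi * v)
            - (Real.pi * v) / (Real.sin (Real.pi * v)) ^ 2)
            * Real.sin (2 ^ (ℓ + 1) * Real.pi * u * v))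
          = ∫ v in (0:ℝ)..(1/2), Fc (2 ^ (ℓ + 1) * Real.pi * u) v := rfl
      rw [hInt, abs_div, abs_of_nonneg (by positivity : (0:ℝ) ≤ 2 ^ ℓ)]
      have hbound := integral_Fc_bound (2 ^ (ℓ + 1) * Real.pi * u) (by positivity)
        ((1/2) ^ (ℓ + 1)) (by positivity)
        (by calc ((1:ℝ)/2) ^ (ℓ + 1) ≤ (1/2) ^ 1 :=
              pow_le_pow_of_le_one (by norm_num) (by norm_num) (by omega)
          _ = 1/2 := pow_one _)
      have hp : (0:ℝ) < 2 ^ ℓ := by positivity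
      have h2 : (2:ℝ) ^ (ℓ + 1) = 2 * 2 ^ ℓ := by rw [pow_succ]; ring
      have h12 : ((1:ℝ)/2) ^ (ℓ + 1) = 1 / (2 * 2 ^ ℓ) := by
        rw [div_pow, one_pow, pow_succ]; ring_nf
      have h8 : (8:ℝ) ^ ℓ = (2 ^ ℓ) ^ 3 := by
        rw [show (8:ℝ) = 2 ^ 3 by norm_num, ← pow_mul, ← pow_mul, Nat.mul_comm]
      calc |∫ v in (0:ℝ)..(1/2), Fc (2 ^ (ℓ + 1) * Real.pi * u) v| / 2 ^ ℓ
          ≤ (π ^ 3 * (2 ^ (ℓ + 1) * Real.pi * u) * ((1/2) ^ (ℓ + 1)) ^ 3 / 18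
              + π ^ 3 / 6 * (1/8 - ((1/2) ^ (ℓ + 1)) ^ 2 / 2)) / 2 ^ ℓ := by gcongr
        _ = π ^ 4 * u / (72 * 8 ^ ℓ) + π ^ 3 / (48 * 2 ^ ℓ) - π ^ 3 / (48 * 8 ^ ℓ) := by
            rw [h2, h12, h8]
            field_simp
            ring
    · rw [if_neg h, if_neg h]; simp
  -- nonnegativity of b
  have hbnn : ∀ ℓ, 0 ≤ b ℓ := by
    intro ℓ
    simp only [hb_def]
    split
    · have h28 : (2:ℝ) ^ ℓ ≤ 8 ^ ℓ := pow_le_pow_left₀ (by norm_num) (by norm_num) ℓ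
      have h1 : π ^ 3 / (48 * 8 ^ ℓ) ≤ π ^ 3 / (48 * 2 ^ ℓ) := by gcongr <;> positivity
      have h2 : (0:ℝ) ≤ π ^ 4 * u / (72 * 8 ^ ℓ) := by positivity
      linarith
    · exact le_rfl
  -- summability of b
  have hble : ∀ ℓ, b ℓ ≤ (π ^ 4 / 72 + π ^ 3 / 48) * (1/2) ^ ℓ := by
    intro ℓ
    · 
      simp only [hb_def]
      have e : ((1:ℝ)/2) ^ ℓ = 1 / 2 ^ ℓ := by rw [div_pow, one_pow]
      split
      · have h28 : (2:ℝ) ^ ℓ ≤ 8 ^ ℓ := pow_le_pow_left₀ (by norm_num) (by norm_num) ℓ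
        have hA : π ^ 4 * u / (72 * 8 ^ ℓ) ≤ π ^ 4 * 1 / (72 * 2 ^ ℓ) := by
          gcongr <;> first | exact hu1 | positivity
        have hB : (0:ℝ) < π ^ 3 / (48 * 8 ^ ℓ) := by positivity
        rw [e]
        have : (π ^ 4 / 72 + π ^ 3 / 48) * (1 / 2 ^ ℓ)
            = π ^ 4 * 1 / (72 * 2 ^ ℓ) + π ^ 3 / (48 * 2 ^ ℓ) := by
          field_simp
        rw [this]
        linarith
      · positivity
  have hbsum : Summable b :=
    Summable.of_nonneg_of_le hbnn hble
      ((summable_geometric_of_lt_one (by norm_num) (by norm_num)).mul_left _)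
  have habs : Summable (fun ℓ => |term ℓ|) :=
    Summable.of_nonneg_of_le (fun ℓ => abs_nonneg _) hterm hbsum
  -- main chain
  have hchain : |∑' ℓ, term ℓ| ≤ ∑' ℓ, b ℓ := by
    calc |∑' ℓ, term ℓ| ≤ ∑' ℓ, |term ℓ| := by
          simpa [Real.norm_eq_abs] using norm_tsum_le_tsum_norm (f := term)
            (by simpa [Real.norm_eq_abs] using habs)
      _ ≤ ∑' ℓ, b ℓ := Summable.tsum_le_tsum hterm habs hbsum
  -- compute tsum b
  set c1 : ℝ := π ^ 4 * u / (72 * 8 ^ (L+1)) - π ^ 3 / (48 * 8 ^ (L+1)) with hc1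
  set c2 : ℝ := π ^ 3 / (48 * 2 ^ (L+1)) with hc2
  have hbshift : ∀ i : ℕ, b (i + (L + 1)) = c1 * (1/8) ^ i + c2 * (1/2) ^ i := by
    intro i
    simp only [hb_def, hc1, hc2]
    rw [if_pos (Nat.le_add_left _ _), pow_add, pow_add]
    have e8 : ((1:ℝ)/8) ^ i = 1 / 8 ^ i := by rw [div_pow, one_pow]
    have e2 : ((1:ℝ)/2) ^ i = 1 / 2 ^ i := by rw [div_pow, one_pow]
    rw [e8, e2]
    field_simp
    ring
  have hsum18 : Summable (fun i : ℕ => c1 * (1/8:ℝ) ^ i) :=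
    (summable_geometric_of_lt_one (by norm_num) (by norm_num)).mul_left _
  have hsum12 : Summable (fun i : ℕ => c2 * (1/2:ℝ) ^ i) :=
    (summable_geometric_of_lt_one (by norm_num) (by norm_num)).mul_left _
  have htsumb : ∑' ℓ, b ℓ = c1 * (1 - 1/8:ℝ)⁻¹ + c2 * (1 - 1/2:ℝ)⁻¹ := by
    rw [← Summable.sum_add_tsum_nat_add (L + 1) hbsum]
    have h0 : ∑ i ∈ Finset.range (L + 1), b i = 0 := by
      apply Finset.sum_eq_zero
      intro i hi
      simp only [hb_def]
      rw [if_neg]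
      simp at hi
      omega
    rw [h0, zero_add]
    calc ∑' i : ℕ, b (i + (L + 1)) = ∑' i : ℕ, (c1 * (1/8:ℝ) ^ i + c2 * (1/2:ℝ) ^ i) := by
          exact tsum_congr hbshift
      _ = c1 * (1 - 1/8:ℝ)⁻¹ + c2 * (1 - 1/2:ℝ)⁻¹ := by
          rw [Summable.tsum_add hsum18 hsum12, tsum_mul_left, tsum_mul_left,
            tsum_geometric_of_lt_one (by norm_num) (by norm_num),
            tsum_geometric_of_lt_one (by norm_num) (by norm_num)]
  refine le_trans hchain ?_
  rw [htsumb, hc1, hc2]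
  have h8L : (8:ℝ) ^ L ≠ 0 := by positivity
  have h2L : (2:ℝ) ^ L ≠ 0 := by positivity
  apply le_of_eq
  rw [pow_succ, pow_succ]
  field_simp
  ring
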